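/- Let B be a real symmetric positive definite n×n matrix with spectral decomposition B⁻¹ = U Λ Uᵀ, Λ = diag(λ₁ ≥ … ≥ λₙ > 0). Suppose B' = B − (1/x) a aᵀ is also symmetric positive definite, where x > 0 and a = e_i − e_j. Let δ' = min_{1≤i≤s} (1/λ_{i+1} − 1/λ_i) > 0 be the minimum separation among the s smallest eigenvalues of B. Then the 2-norm of the diagonal matrix of sines of principal angles between the span of the first s eigenvectors of B⁻¹ and of (B')⁻¹ is at most 4/(x·δ'). -/

import Mathlib

open Matrix

/-- Operator 2-norm of a real matrix, via the induced Euclidean operator norm. -/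
noncomputable def opNorm {n : ℕ} (M : Matrix (Fin n) (Fin n) ℝ) : ℝ :=
  ‖LinearMap.toContinuousLinearMap (Matrix.toEuclideanLin M)‖

section Helpers

def SQ {n : ℕ} (A : Matrix (Fin n) (Fin n) ℝ) : ℝ := ∑ p, ∑ q, (A p q)^2

lemma SQ_eq_trace {n : ℕ} (A : Matrix (Fin n) (Fin n) ℝ) :
    SQ A = Matrix.trace (Aᵀ * A) := by
  simp only [SQ, Matrix.trace, Matrix.diag, Matrix.mul_apply, Matrix.transpose_apply]
  rw [Finset.sum_comm]
  congr 1; ext p; congr 1; ext q; ring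

lemma SQ_mul_orth_left {n : ℕ} {R : Matrix (Fin n) (Fin n) ℝ} (hR : Rᵀ * R = 1)
    (A : Matrix (Fin n) (Fin n) ℝ) : SQ (R * A) = SQ A := by
  rw [SQ_eq_trace, SQ_eq_trace, Matrix.transpose_mul]
  rw [show Aᵀ * Rᵀ * (R * A) = Aᵀ * (Rᵀ * R) * A by noncomm_ring, hR, Matrix.mul_one]

lemma SQ_mul_orth_right {n : ℕ} {S : Matrix (Fin n) (Fin n) ℝ} (hS : S * Sᵀ = 1)
    (A : Matrix (Fin n) (Fin n) ℝ) : SQ (A * S) = SQ A := by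
  rw [SQ_eq_trace, SQ_eq_trace, Matrix.transpose_mul]
  rw [show Sᵀ * Aᵀ * (A * S) = Sᵀ * (Aᵀ * A * S) by noncomm_ring, Matrix.trace_mul_comm,
    show Aᵀ * A * S * Sᵀ = Aᵀ * A * (S * Sᵀ) by noncomm_ring, hS, Matrix.mul_one]

lemma opNorm_le_of_SQ_le {n : ℕ} (M : Matrix (Fin n) (Fin n) ℝ) {c : ℝ}
    (hc : 0 ≤ c) (h : SQ M ≤ c^2) : opNorm M ≤ c := by
  apply ContinuousLinearMap.opNorm_le_bound _ hc
  intro v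
  rw [LinearMap.coe_toContinuousLinearMap', Matrix.toEuclideanLin_apply]
  rw [EuclideanSpace.norm_eq, EuclideanSpace.norm_eq]
  set w : Fin n → ℝ := (WithLp.equiv 2 (Fin n → ℝ)) v with hw
  have hws : ∀ q, ‖v q‖^2 = w q^2 := by intro q; simp [hw, Real.norm_eq_abs, sq_abs]
  have h1 : ∀ p : Fin n, ‖(WithLp.equiv 2 (Fin n → ℝ)).symm (M *ᵥ w) p‖^2
      = (∑ q, M p q * w q)^2 := by
    intro p; simp [Matrix.mulVec, dotProduct, Real.norm_eq_abs, sq_abs]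
  calc Real.sqrt (∑ p, ‖(WithLp.equiv 2 (Fin n → ℝ)).symm (M *ᵥ w) p‖^2)
      = Real.sqrt (∑ p, (∑ q, M p q * w q)^2) := by rw [Finset.sum_congr rfl (fun p _ => h1 p)]
    _ ≤ Real.sqrt (c^2 * (∑ q, w q^2)) := by
        apply Real.sqrt_le_sqrt
        calc ∑ p, (∑ q, M p q * w q)^2
            ≤ ∑ p, (∑ q, (M p q)^2) * (∑ q, w q^2) := by
              apply Finset.sum_le_sum; intro p _
              exact Finset.sum_mul_sq_le_sq_mul_sq Finset.univ _ _
          _ = SQ M * (∑ q, w q^2) := by rw [SQ, Finset.sum_mul]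
          _ ≤ c^2 * (∑ q, w q^2) := by
              apply mul_le_mul_of_nonneg_right h
              apply Finset.sum_nonneg; intro q _; positivity
    _ = c * Real.sqrt (∑ q, w q^2) := by
        rw [Real.sqrt_mul (by positivity), Real.sqrt_sq hc]
    _ = c * Real.sqrt (∑ q, ‖v q‖^2) := by
        congr 2; exact Finset.sum_congr rfl (fun q _ => (hws q).symm)

lemma sum_fin_lt {n s : ℕ} (hsn : s ≤ n) (f : Fin n → ℝ) :
    ∑ q : Fin n, (if (q : ℕ) < s then f q else 0) = ∑ r : Fin s, f (Fin.castLE hsn r) := by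
  classical
  set emb : Fin s ↪ Fin n := ⟨Fin.castLE hsn, Fin.castLE_injective hsn⟩ with hemb
  have h1 : ∑ q ∈ Finset.univ.map emb, (if (q : ℕ) < s then f q else 0)
      = ∑ r : Fin s, f (Fin.castLE hsn r) := by
    rw [Finset.sum_map]
    exact Finset.sum_congr rfl (fun r _ => by simp [hemb, r.isLt])
  have h2 : ∑ q : Fin n, (if (q : ℕ) < s then f q else 0)
      = ∑ q ∈ Finset.univ.map emb, (if (q : ℕ) < s then f q else 0) := by
    symm
    apply Finset.sum_subset (Finset.subset_univ _)
    intro q _ hq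
    rw [if_neg]
    intro hlt
    exact hq (Finset.mem_map.2 ⟨⟨(q : ℕ), hlt⟩, Finset.mem_univ _, by simp [hemb, Fin.ext_iff]⟩)
  rw [h2, h1]

lemma orth_dot {n : ℕ} {U : Matrix (Fin n) (Fin n) ℝ} (hU : Uᵀ * U = 1)
    (x y : Fin n → ℝ) : (U *ᵥ x) ⬝ᵥ (U *ᵥ y) = x ⬝ᵥ y := by
  rw [Matrix.dotProduct_mulVec]
  have : (U *ᵥ x) ᵥ* U = x := by
    rw [show U = (Uᵀ)ᵀ by rw [Matrix.transpose_transpose], Matrix.vecMul_transpose,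
      Matrix.transpose_transpose, Matrix.mulVec_mulVec, hU, Matrix.one_mulVec]
  rw [this]

lemma diag_quad {n : ℕ} (d : Fin n → ℝ) (x : Fin n → ℝ) :
    x ⬝ᵥ ((Matrix.diagonal d) *ᵥ x) = ∑ p, d p * (x p)^2 := by
  simp [dotProduct, Matrix.mulVec_diagonal]
  congr 1; ext p; ring

lemma eig_eq {n : ℕ} {B U : Matrix (Fin n) (Fin n) ℝ} {lam : Fin n → ℝ}
    (hB : B.PosDef) (hU : Uᵀ * U = 1) (hdec : B⁻¹ = U * Matrix.diagonal lam * Uᵀ)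
    (hlam : ∀ k, lam k ≠ 0) :
    B * U = U * Matrix.diagonal (fun k => (lam k)⁻¹) := by
  have hinvU : B⁻¹ * U = U * Matrix.diagonal lam := by
    rw [hdec, Matrix.mul_assoc (U * Matrix.diagonal lam), hU, Matrix.mul_one]
  have hBBinv : B * B⁻¹ = 1 := Matrix.mul_nonsing_inv _ hB.det_pos.ne'.isUnit
  have hU_eq : (B * U) * Matrix.diagonal lam = U := by
    calc (B * U) * Matrix.diagonal lam = B * (U * Matrix.diagonal lam) := by rw [Matrix.mul_assoc]
      _ = B * (B⁻¹ * U) := by rw [hinvU]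
      _ = (B * B⁻¹) * U := by rw [Matrix.mul_assoc]
      _ = U := by rw [hBBinv, Matrix.one_mul]
  have hdd : Matrix.diagonal lam * Matrix.diagonal (fun k => (lam k)⁻¹) = 1 := by
    rw [Matrix.diagonal_mul_diagonal]
    rw [show (fun k => lam k * (lam k)⁻¹) = fun _ => (1:ℝ) by
      funext k; exact mul_inv_cancel₀ (hlam k)]
    exact Matrix.diagonal_one
  calc B * U = (B * U) * (Matrix.diagonal lam * Matrix.diagonal (fun k => (lam k)⁻¹)) := by
        rw [hdd, Matrix.mul_one]
    _ = ((B * U) * Matrix.diagonal lam) * Matrix.diagonal (fun k => (lam k)⁻¹) := by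
        noncomm_ring
    _ = U * Matrix.diagonal (fun k => (lam k)⁻¹) := by rw [hU_eq]

lemma key_minmax {n s : ℕ} (hs0 : 0 < s) (hsn : s + 1 ≤ n)
    {B B' U U' : Matrix (Fin n) (Fin n) ℝ} {nu nu' : Fin n → ℝ}
    (hU : Uᵀ * U = 1) (hU' : U'ᵀ * U' = 1) (hU'U' : U' * U'ᵀ = 1)
    (hBU : B * U = U * Matrix.diagonal nu) (hB'U' : B' * U' = U' * Matrix.diagonal nu')
    (hnu : Monotone nu) (hnu' : Monotone nu')
    (hle : ∀ v, v ⬝ᵥ (B' *ᵥ v) ≤ v ⬝ᵥ (B *ᵥ v)) :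
    nu' ⟨s - 1, by omega⟩ ≤ nu ⟨s - 1, by omega⟩ := by
  classical
  have hsn' : s ≤ n := by omega
  set m : Fin n := ⟨s - 1, by omega⟩ with hm
  set K : Matrix (Fin (s-1)) (Fin s) ℝ :=
    Matrix.of (fun r c => (U'ᵀ * U) ⟨r.1, by omega⟩ (Fin.castLE hsn' c)) with hK
  have hker : ∃ c : Fin s → ℝ, c ≠ 0 ∧ K *ᵥ c = 0 := by
    by_contra h
    push_neg at h
    have hinj : Function.Injective K.mulVecLin := by
      rw [injective_iff_map_eq_zero]
      intro c hc
      by_contra hc0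
      exact (h c hc0) (by simpa [Matrix.mulVecLin] using hc)
    have := LinearMap.finrank_le_finrank_of_injective hinj
    simp only [Module.finrank_fintype_fun_eq_card, Fintype.card_fin] at this
    omega
  obtain ⟨c, hc, hKc⟩ := hker
  set cfull : Fin n → ℝ := fun p => if h : (p : ℕ) < s then c ⟨p, h⟩ else 0 with hcfull
  have hcf_cast : ∀ r : Fin s, cfull (Fin.castLE hsn' r) = c r := by
    intro r; simp [hcfull, r.isLt]
  have hsum : ∀ g : Fin n → ℝ,
      (∑ p, g p * cfull p) = ∑ r : Fin s, g (Fin.castLE hsn' r) * c r := by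
    intro g
    have : ∀ p : Fin n, g p * cfull p = if (p : ℕ) < s then g p * cfull p else 0 := by
      intro p
      by_cases h : (p : ℕ) < s
      · rw [if_pos h]
      · rw [if_neg h, hcfull]; simp [h]
    rw [Finset.sum_congr rfl (fun p _ => this p), sum_fin_lt hsn']
    exact Finset.sum_congr rfl (fun r _ => by rw [hcf_cast])
  set c' : Fin n → ℝ := (U'ᵀ * U) *ᵥ cfull with hc'def
  have hc'0 : ∀ q : Fin n, (q : ℕ) < s - 1 → c' q = 0 := by
    intro q hq
    have : c' q = (K *ᵥ c) ⟨q.1, hq⟩ := by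
      rw [hc'def]
      show ∑ p, (U'ᵀ * U) q p * cfull p = _
      rw [hsum (fun p => (U'ᵀ * U) q p)]
      simp only [Matrix.mulVec, dotProduct, hK, Matrix.of_apply]
    rw [this, hKc]
    rfl
  set v : Fin n → ℝ := U *ᵥ cfull with hv
  have hvc' : v = U' *ᵥ c' := by
    rw [hv, hc'def, Matrix.mulVec_mulVec, ← Matrix.mul_assoc, hU'U', Matrix.one_mul]
  have quad_eig : ∀ (V C : Matrix (Fin n) (Fin n) ℝ) (mu : Fin n → ℝ) (x : Fin n → ℝ),
      Vᵀ * V = 1 → C * V = V * Matrix.diagonal mu →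
      (V *ᵥ x) ⬝ᵥ (C *ᵥ (V *ᵥ x)) = ∑ p, mu p * (x p)^2 := by
    intro V C mu x h1 h2
    rw [Matrix.mulVec_mulVec, h2, ← Matrix.mulVec_mulVec, orth_dot h1, diag_quad]
  have qB : v ⬝ᵥ (B *ᵥ v) = ∑ p, nu p * (cfull p)^2 := by
    rw [hv]; exact quad_eig U B nu cfull hU hBU
  have qB' : v ⬝ᵥ (B' *ᵥ v) = ∑ q, nu' q * (c' q)^2 := by
    rw [hvc']; exact quad_eig U' B' nu' c' hU' hB'U'
  have hSS : ∑ q, (c' q)^2 = ∑ p, (cfull p)^2 := by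
    have h1 : c' ⬝ᵥ c' = cfull ⬝ᵥ cfull := by
      calc c' ⬝ᵥ c' = (U' *ᵥ c') ⬝ᵥ (U' *ᵥ c') := (orth_dot hU' c' c').symm
        _ = (U *ᵥ cfull) ⬝ᵥ (U *ᵥ cfull) := by rw [← hvc', hv]
        _ = cfull ⬝ᵥ cfull := orth_dot hU cfull cfull
    simpa [dotProduct, sq] using h1
  have hS : 0 < ∑ p, (cfull p)^2 := by
    obtain ⟨r, hr⟩ := Function.ne_iff.1 hc
    apply Finset.sum_pos' (fun p _ => sq_nonneg _)
    exact ⟨Fin.castLE hsn' r, Finset.mem_univ _, by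
      rw [hcf_cast]
      exact lt_of_le_of_ne (sq_nonneg _) (Ne.symm (pow_ne_zero 2 hr))⟩
  have bound1 : ∑ p, nu p * (cfull p)^2 ≤ nu m * ∑ p, (cfull p)^2 := by
    rw [Finset.mul_sum]
    apply Finset.sum_le_sum
    intro p _
    by_cases h : (p : ℕ) < s
    · exact mul_le_mul_of_nonneg_right (hnu (by simp [hm, Fin.le_def]; omega)) (sq_nonneg _)
    · rw [hcfull]; simp [h]
  have bound2 : nu' m * ∑ q, (c' q)^2 ≤ ∑ q, nu' q * (c' q)^2 := by
    rw [Finset.mul_sum]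
    apply Finset.sum_le_sum
    intro q _
    by_cases h : (q : ℕ) < s - 1
    · rw [hc'0 q h]; simp
    · exact mul_le_mul_of_nonneg_right (hnu' (by simp [hm, Fin.le_def]; omega)) (sq_nonneg _)
  have chain : nu' m * ∑ p, (cfull p)^2 ≤ nu m * ∑ p, (cfull p)^2 := by
    calc nu' m * ∑ p, (cfull p)^2 = nu' m * ∑ q, (c' q)^2 := by rw [hSS]
      _ ≤ ∑ q, nu' q * (c' q)^2 := bound2
      _ = v ⬝ᵥ (B' *ᵥ v) := qB'.symm
      _ ≤ v ⬝ᵥ (B *ᵥ v) := hle v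
      _ = ∑ p, nu p * (cfull p)^2 := qB
      _ ≤ nu m * ∑ p, (cfull p)^2 := bound1
  exact le_of_mul_le_mul_right (by simpa [mul_comm] using chain) hS

end Helpers

set_option maxHeartbeats 4000000

/-- Davis–Kahan type bound (Proposition 3, ℓ₂ version) for the rank-one Laplacian
perturbation `B' = B - (1/x) a aᵀ`, `a = e_i - e_j`: the 2-norm distance between the
leading `s`-dimensional eigenspaces of `B⁻¹` and `(B')⁻¹` (expressed as the 2-norm of
the difference of the corresponding orthogonal projectors, which equals the 2-norm of
the diagonal matrix of sines of the principal angles) is at most `4/(x δ')`. -/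
theorem stmt6 {n s : ℕ} (hs0 : 0 < s) (hsn : s + 1 ≤ n)
    (B : Matrix (Fin n) (Fin n) ℝ) (hB : B.PosDef)
    (x : ℝ) (hx : 0 < x) (i j : Fin n) (hij : i ≠ j)
    (a : Fin n → ℝ) (ha : a = fun v => if v = i then 1 else if v = j then -1 else 0)
    (B' : Matrix (Fin n) (Fin n) ℝ) (hB'def : B' = B - x⁻¹ • vecMulVec a a)
    (hB' : B'.PosDef)
    (U U' : Matrix (Fin n) (Fin n) ℝ) (lam lam' : Fin n → ℝ)
    (hU : Uᵀ * U = 1) (hU' : U'ᵀ * U' = 1)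
    (hlam : Antitone lam) (hlam' : Antitone lam') (hlampos : ∀ k, 0 < lam k)
    (hdec : B⁻¹ = U * Matrix.diagonal lam * Uᵀ)
    (hdec' : B'⁻¹ = U' * Matrix.diagonal lam' * U'ᵀ)
    (δ' : ℝ)
    (hδ'def : δ' = Finset.univ.inf' ⟨⟨0, hs0⟩, Finset.mem_univ _⟩
      (fun k : Fin s =>
        (lam (Fin.castLE hsn k.succ))⁻¹ -
        (lam (Fin.castLE hsn k.castSucc))⁻¹))
    (hδ' : 0 < δ') :
    let cast : Fin s → Fin n := fun q => Fin.castLE (by omega) q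
    let Vs : Matrix (Fin n) (Fin s) ℝ := Matrix.of fun p q => U p (cast q)
    let Vs' : Matrix (Fin n) (Fin s) ℝ := Matrix.of fun p q => U' p (cast q)
    opNorm (Vs * Vsᵀ - Vs' * Vs'ᵀ) ≤ 4 / (x * δ') := by
  classical
  intro cast Vs Vs'
  have hsn' : s ≤ n := by omega
  have hUU : U * Uᵀ = 1 := mul_eq_one_comm.mp hU
  have hU'U' : U' * U'ᵀ = 1 := mul_eq_one_comm.mp hU'
  -- positivity of lam'
  have hlam'pos : ∀ k, 0 < lam' k := by
    intro k
    have hdiag' : Matrix.diagonal lam' = U'ᵀ * B'⁻¹ * U' := by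
      rw [hdec']
      rw [show U'ᵀ * (U' * Matrix.diagonal lam' * U'ᵀ) * U'
          = (U'ᵀ * U') * Matrix.diagonal lam' * (U'ᵀ * U') by noncomm_ring, hU',
        Matrix.one_mul, Matrix.mul_one]
    have hu : (fun p => U' p k) ≠ 0 := by
      intro h0
      have h1 : (U'ᵀ * U') k k = (1 : Matrix (Fin n) (Fin n) ℝ) k k := by rw [hU']
      simp only [Matrix.mul_apply, Matrix.transpose_apply, Matrix.one_apply_eq] at h1
      rw [Finset.sum_congr rfl (fun p _ => by
        rw [show U' p k = 0 from congrFun h0 p, mul_zero])] at h1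
      simp at h1
    have hpos := hB'.inv.dotProduct_mulVec_pos hu
    have hk : lam' k = (fun p => U' p k) ⬝ᵥ (B'⁻¹ *ᵥ (fun p => U' p k)) := by
      have h2 := congrFun (congrFun hdiag' k) k
      rw [Matrix.diagonal_apply_eq] at h2
      rw [h2]
      simp only [Matrix.mul_apply, Matrix.mulVec, dotProduct,
        Matrix.transpose_apply, Finset.sum_mul, Finset.mul_sum]
      rw [Finset.sum_comm]
      exact Finset.sum_congr rfl (fun p _ => Finset.sum_congr rfl (fun q _ => by ring))
    rw [hk]
    simpa using hpos
  -- eigen-equations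
  set nu : Fin n → ℝ := fun k => (lam k)⁻¹ with hnudef
  set nu' : Fin n → ℝ := fun k => (lam' k)⁻¹ with hnu'def
  have hBU : B * U = U * Matrix.diagonal nu :=
    eig_eq hB hU hdec (fun k => (hlampos k).ne')
  have hB'U' : B' * U' = U' * Matrix.diagonal nu' :=
    eig_eq hB' hU' hdec' (fun k => (hlam'pos k).ne')
  have hnumono : Monotone nu := by
    intro k l hkl
    exact inv_anti₀ (hlampos l) (hlam hkl)
  have hnu'mono : Monotone nu' := by
    intro k l hkl
    exact inv_anti₀ (hlam'pos l) (hlam' hkl)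
  -- quadratic form comparison
  have hle : ∀ v, v ⬝ᵥ (B' *ᵥ v) ≤ v ⬝ᵥ (B *ᵥ v) := by
    intro v
    rw [hB'def, Matrix.sub_mulVec, dotProduct_sub]
    have hnn : 0 ≤ v ⬝ᵥ ((x⁻¹ • vecMulVec a a) *ᵥ v) := by
      have hvv : (vecMulVec a a) *ᵥ v = (a ⬝ᵥ v) • a := by
        ext p
        simp only [Matrix.mulVec, dotProduct, Matrix.vecMulVec_apply,
          Pi.smul_apply, smul_eq_mul]
        rw [Finset.sum_mul]
        exact Finset.sum_congr rfl (fun q _ => by ring)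
      rw [Matrix.smul_mulVec, hvv]
      rw [dotProduct_smul, dotProduct_smul]
      have : v ⬝ᵥ a = a ⬝ᵥ v := dotProduct_comm v a
      simp only [smul_eq_mul, this]
      exact mul_nonneg (inv_nonneg.2 hx.le) (mul_self_nonneg _)
    linarith
  -- separation
  have hkey : nu' ⟨s - 1, by omega⟩ ≤ nu ⟨s - 1, by omega⟩ :=
    key_minmax hs0 hsn hU hU' hU'U' hBU hB'U' hnumono hnu'mono hle
  have hgap : δ' ≤ nu ⟨s, by omega⟩ - nu ⟨s - 1, by omega⟩ := by
    have e1 : Fin.castLE hsn (⟨s - 1, by omega⟩ : Fin s).succ = (⟨s, by omega⟩ : Fin n) := by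
      simp [Fin.ext_iff]; omega
    have e2 : Fin.castLE hsn (⟨s - 1, by omega⟩ : Fin s).castSucc
        = (⟨s - 1, by omega⟩ : Fin n) := by
      simp [Fin.ext_iff]
    calc δ' ≤ (lam (Fin.castLE hsn (⟨s - 1, by omega⟩ : Fin s).succ))⁻¹ -
          (lam (Fin.castLE hsn (⟨s - 1, by omega⟩ : Fin s).castSucc))⁻¹ := by
          rw [hδ'def]
          exact Finset.inf'_le _ (Finset.mem_univ _)
      _ = nu ⟨s, by omega⟩ - nu ⟨s - 1, by omega⟩ := by rw [e1, e2]
  have hsep : ∀ p q : Fin n, s ≤ (p : ℕ) → (q : ℕ) < s → δ' + nu' q ≤ nu p := by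
    intro p q hp hq
    have h2 : nu' q ≤ nu' ⟨s - 1, by omega⟩ := hnu'mono (by simp [Fin.le_def]; omega)
    have h4 : nu ⟨s, by omega⟩ ≤ nu p := hnumono (by simp [Fin.le_def]; omega)
    linarith
  -- projector matrices
  set χ : Fin n → ℝ := fun k => if (k : ℕ) < s then 1 else 0 with hχ
  set Dχ : Matrix (Fin n) (Fin n) ℝ := Matrix.diagonal χ with hDχ
  have hproj : ∀ (V : Matrix (Fin n) (Fin n) ℝ),
      (Matrix.of fun p (q : Fin s) => V p (cast q)) *
        (Matrix.of fun p (q : Fin s) => V p (cast q))ᵀ = V * Dχ * Vᵀ := by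
    intro V
    ext p r
    have hRHS : (V * Dχ * Vᵀ) p r = ∑ q : Fin n, (if (q:ℕ) < s then V p q * V r q else 0) := by
      rw [Matrix.mul_apply]
      apply Finset.sum_congr rfl
      intro q _
      rw [hDχ, Matrix.mul_diagonal, Matrix.transpose_apply, hχ]
      by_cases h : (q:ℕ) < s <;> simp [h]
    have hLHS : ((Matrix.of fun p (q : Fin s) => V p (cast q)) *
        (Matrix.of fun p (q : Fin s) => V p (cast q))ᵀ) p r
        = ∑ q : Fin s, V p (cast q) * V r (cast q) := by
      rw [Matrix.mul_apply]
      rfl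
    rw [hLHS, hRHS, sum_fin_lt hsn' (fun q => V p q * V r q)]
  have hM0 : Vs * Vsᵀ - Vs' * Vs'ᵀ = U * Dχ * Uᵀ - U' * Dχ * U'ᵀ := by
    rw [show Vs = Matrix.of fun p (q : Fin s) => U p (cast q) from rfl,
      show Vs' = Matrix.of fun p (q : Fin s) => U' p (cast q) from rfl,
      hproj U, hproj U']
  rw [hM0]
  -- W and C
  set W : Matrix (Fin n) (Fin n) ℝ := Uᵀ * U' with hWdef
  have hWt : Wᵀ = U'ᵀ * U := by rw [hWdef, Matrix.transpose_mul, Matrix.transpose_transpose]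
  have hWorth : Wᵀ * W = 1 := by
    rw [hWt, hWdef, show U'ᵀ * U * (Uᵀ * U') = U'ᵀ * (U * Uᵀ) * U' by noncomm_ring, hUU,
      Matrix.mul_one, hU']
  set C : Matrix (Fin n) (Fin n) ℝ :=
    Matrix.diagonal nu * W - W * Matrix.diagonal nu' with hCdef
  have hBsym : Bᵀ = B := by simpa [Matrix.IsHermitian] using hB.isHermitian
  have hUtB : Uᵀ * B = Matrix.diagonal nu * Uᵀ := by
    have := congrArg Matrix.transpose hBU
    rw [Matrix.transpose_mul, Matrix.transpose_mul, hBsym, Matrix.diagonal_transpose] at this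
    exact this
  have hCeq : C = Uᵀ * (B - B') * U' := by
    rw [hCdef, Matrix.mul_sub, Matrix.sub_mul]
    congr 1
    · rw [hWdef, ← Matrix.mul_assoc, ← hUtB, Matrix.mul_assoc]
    · rw [hWdef, Matrix.mul_assoc, ← hB'U', ← Matrix.mul_assoc]
  have hCentry : ∀ p q, C p q = (nu p - nu' q) * W p q := by
    intro p q
    rw [hCdef]
    simp only [Matrix.sub_apply, Matrix.diagonal_mul, Matrix.mul_diagonal]
    ring

  -- trace facts
  have hχs : ∑ k, χ k = (s:ℝ) := by
    have : ∀ k : Fin n, χ k = if (k:ℕ) < s then (1:ℝ) else 0 := fun k => rfl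
    rw [Finset.sum_congr rfl (fun k _ => this k), sum_fin_lt hsn' (fun _ => (1:ℝ))]
    simp
  have hDχ2 : Dχ * Dχ = Dχ := by
    rw [hDχ, Matrix.diagonal_mul_diagonal]
    have e0 : (fun k => χ k * χ k) = χ := by
      funext k
      by_cases h : (k:ℕ) < s <;> simp [hχ, h]
    rw [e0]
  have hDχt : Dχᵀ = Dχ := by rw [hDχ, Matrix.diagonal_transpose]
  have hAsq : ∀ V : Matrix (Fin n) (Fin n) ℝ, Vᵀ * V = 1 →
      (V * Dχ * Vᵀ) * (V * Dχ * Vᵀ) = V * Dχ * Vᵀ := by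
    intro V hV
    calc (V * Dχ * Vᵀ) * (V * Dχ * Vᵀ) = (V * Dχ) * (Vᵀ * V) * (Dχ * Vᵀ) := by noncomm_ring
      _ = (V * Dχ) * (Dχ * Vᵀ) := by rw [hV, Matrix.mul_one]
      _ = V * (Dχ * Dχ) * Vᵀ := by noncomm_ring
      _ = V * Dχ * Vᵀ := by rw [hDχ2]
  have htrA : ∀ V : Matrix (Fin n) (Fin n) ℝ, Vᵀ * V = 1 →
      Matrix.trace (V * Dχ * Vᵀ) = (s:ℝ) := by
    intro V hV
    rw [Matrix.trace_mul_comm, ← Matrix.mul_assoc, hV, Matrix.one_mul, hDχ,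
      Matrix.trace_diagonal, hχs]
  set T : ℝ := ∑ p, ∑ q, χ p * χ q * (W p q)^2 with hT
  have htrX : Matrix.trace ((U * Dχ * Uᵀ) * (U' * Dχ * U'ᵀ)) = T := by
    have e1 : (U * Dχ * Uᵀ) * (U' * Dχ * U'ᵀ) = U * ((Dχ * W * Dχ) * U'ᵀ) := by
      rw [hWdef]; noncomm_ring
    rw [e1, Matrix.trace_mul_comm, Matrix.mul_assoc, ← hWt, hT]
    simp only [Matrix.trace, Matrix.diag]
    apply Finset.sum_congr rfl
    intro p _
    rw [Matrix.mul_apply]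
    apply Finset.sum_congr rfl
    intro q _
    rw [hDχ, Matrix.mul_diagonal, Matrix.diagonal_mul, Matrix.transpose_apply]
    ring
  have hMt : (U * Dχ * Uᵀ - U' * Dχ * U'ᵀ)ᵀ = U * Dχ * Uᵀ - U' * Dχ * U'ᵀ := by
    rw [Matrix.transpose_sub]
    congr 1 <;>
      rw [Matrix.transpose_mul, Matrix.transpose_mul, Matrix.transpose_transpose, hDχt,
        ← Matrix.mul_assoc]
  have hSQM : SQ (U * Dχ * Uᵀ - U' * Dχ * U'ᵀ) = 2 * (s:ℝ) - 2 * T := by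
    rw [SQ_eq_trace, hMt]
    have expand : (U * Dχ * Uᵀ - U' * Dχ * U'ᵀ) * (U * Dχ * Uᵀ - U' * Dχ * U'ᵀ)
        = (U * Dχ * Uᵀ) * (U * Dχ * Uᵀ) - (U * Dχ * Uᵀ) * (U' * Dχ * U'ᵀ)
          - (U' * Dχ * U'ᵀ) * (U * Dχ * Uᵀ) + (U' * Dχ * U'ᵀ) * (U' * Dχ * U'ᵀ) := by
      noncomm_ring
    rw [expand, Matrix.trace_add, Matrix.trace_sub, Matrix.trace_sub,
      hAsq U hU, hAsq U' hU', htrA U hU, htrA U' hU',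
      Matrix.trace_mul_comm (U' * Dχ * U'ᵀ), htrX]
    ring
  have hcol : ∀ q, ∑ p, (W p q)^2 = 1 := by
    intro q
    have h1 : (Wᵀ * W) q q = (1 : Matrix (Fin n) (Fin n) ℝ) q q := by rw [hWorth]
    simp only [Matrix.mul_apply, Matrix.transpose_apply, Matrix.one_apply_eq] at h1
    calc ∑ p, (W p q)^2 = ∑ p, W p q * W p q := by
          exact Finset.sum_congr rfl (fun p _ => sq (W p q))
      _ = 1 := h1
  have hsum1 : ∑ p, ∑ q, χ q * (W p q)^2 = (s:ℝ) := by
    rw [Finset.sum_comm]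
    calc ∑ q, ∑ p, χ q * (W p q)^2 = ∑ q : Fin n, χ q * ∑ p, (W p q)^2 :=
          Finset.sum_congr rfl (fun q _ => (Finset.mul_sum _ _ _).symm)
      _ = ∑ q, χ q := Finset.sum_congr rfl (fun q _ => by rw [hcol q, mul_one])
      _ = (s:ℝ) := hχs
  have hT'eq : ∑ p, ∑ q, (1 - χ p) * χ q * (W p q)^2 = (s:ℝ) - T := by
    have e2 : ∀ p : Fin n, ∑ q, (1 - χ p) * χ q * (W p q)^2
        = (∑ q, χ q * (W p q)^2) - ∑ q, χ p * χ q * (W p q)^2 := by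
      intro p
      rw [← Finset.sum_sub_distrib]
      exact Finset.sum_congr rfl (fun q _ => by ring)
    rw [Finset.sum_congr rfl (fun p _ => e2 p), Finset.sum_sub_distrib, hsum1, hT]
  have hterm : ∀ p q : Fin n, (1 - χ p) * χ q * (W p q)^2 ≤ (C p q)^2 / δ'^2 := by
    intro p q
    have hCnn : (0:ℝ) ≤ (C p q)^2 / δ'^2 := by positivity
    by_cases hp : (p:ℕ) < s
    · have : χ p = 1 := by rw [hχ]; simp [hp]
      rw [this]
      simpa using hCnn
    · by_cases hq : (q:ℕ) < s
      · have hd : δ' ≤ nu p - nu' q := by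
          have := hsep p q (by omega) hq; linarith
        have h1 : (C p q)^2 = (nu p - nu' q)^2 * (W p q)^2 := by rw [hCentry]; ring
        have h2 : δ'^2 ≤ (nu p - nu' q)^2 := pow_le_pow_left₀ hδ'.le hd 2
        have e3 : χ p = 0 := by rw [hχ]; simp [hp]
        have e4 : χ q = 1 := by rw [hχ]; simp [hq]
        rw [e3, e4]
        rw [show (1 - (0:ℝ)) * 1 * (W p q)^2 = (W p q)^2 by ring]
        rw [le_div_iff₀ (by positivity : (0:ℝ) < δ'^2)]
        calc (W p q)^2 * δ'^2 ≤ (W p q)^2 * (nu p - nu' q)^2 :=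
              mul_le_mul_of_nonneg_left h2 (sq_nonneg _)
          _ = (C p q)^2 := by rw [h1]; ring
      · have : χ q = 0 := by rw [hχ]; simp [hq]
        rw [this]
        simpa using hCnn
  have hsum_bound : ∑ p, ∑ q, (1 - χ p) * χ q * (W p q)^2 ≤ SQ C / δ'^2 := by
    rw [SQ, Finset.sum_div]
    apply Finset.sum_le_sum
    intro p _
    rw [Finset.sum_div]
    exact Finset.sum_le_sum (fun q _ => hterm p q)
  have ha2 : ∑ p, (a p)^2 = 2 := by
    rw [ha]
    have e : ∀ p : Fin n, ((if p = i then (1:ℝ) else if p = j then -1 else 0))^2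
        = (if p = i then (1:ℝ) else 0) + (if p = j then 1 else 0) := by
      intro p
      by_cases h1 : p = i
      · rw [if_pos h1, if_pos h1, if_neg (fun hpj => hij (h1.symm.trans hpj))]
        norm_num
      · by_cases h2 : p = j <;> simp [h1, h2, Ne.symm hij]
    rw [Finset.sum_congr rfl (fun p _ => e p), Finset.sum_add_distrib]
    simp only [Finset.sum_ite_eq', Finset.mem_univ, if_true]
    norm_num
  have hEeq : B - B' = x⁻¹ • vecMulVec a a := by rw [hB'def, sub_sub_cancel]
  have hSQE : SQ (x⁻¹ • vecMulVec a a) = 4 / x^2 := by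
    have e : ∀ p q : Fin n, ((x⁻¹ • vecMulVec a a) p q)^2 = x⁻¹^2 * ((a p)^2 * (a q)^2) := by
      intro p q
      simp only [Matrix.smul_apply, Matrix.vecMulVec_apply, smul_eq_mul]
      ring
    calc SQ (x⁻¹ • vecMulVec a a) = ∑ p, ∑ q, x⁻¹^2 * ((a p)^2 * (a q)^2) := by
          rw [SQ]
          exact Finset.sum_congr rfl (fun p _ => Finset.sum_congr rfl (fun q _ => e p q))
      _ = x⁻¹^2 * ((∑ p, (a p)^2) * (∑ q, (a q)^2)) := by
          rw [Finset.sum_mul_sum, Finset.mul_sum]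
          exact Finset.sum_congr rfl (fun p _ => by rw [Finset.mul_sum])
      _ = 4 / x^2 := by
          rw [ha2]
          field_simp
          ring
  have hSQC : SQ C = 4 / x^2 := by
    rw [hCeq, hEeq, Matrix.mul_assoc,
      SQ_mul_orth_left (by rw [Matrix.transpose_transpose]; exact hUU),
      SQ_mul_orth_right hU'U']
    exact hSQE
  apply opNorm_le_of_SQ_le _ (by positivity)
  have h8 : SQ (U * Dχ * Uᵀ - U' * Dχ * U'ᵀ) ≤ 8 / (x^2 * δ'^2) := by
    rw [hSQM, show 2 * (s:ℝ) - 2 * T = 2 * ((s:ℝ) - T) by ring, ← hT'eq]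
    calc 2 * (∑ p, ∑ q, (1 - χ p) * χ q * (W p q)^2) ≤ 2 * (SQ C / δ'^2) := by
          linarith [hsum_bound]
      _ = 8 / (x^2 * δ'^2) := by
          rw [hSQC]
          field_simp
          ring
  refine le_trans h8 ?_
  have hden : (0:ℝ) < x^2 * δ'^2 := by positivity
  rw [div_pow, mul_pow]
  exact (div_le_div_iff_of_pos_right hden).mpr (by norm_num)
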